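/- There exist infinitely many strong Eulerian triples; that is, the collection of sets {x₁, x₂, x₃} of three distinct rational numbers such that x₁x₂+x₁+x₂, x₁x₃+x₁+x₃, x₂x₃+x₂+x₃, x₁²+2x₁, x₂²+2x₂ and x₃²+2x₃ are all squares of rational numbers is infinite. -/

import Mathlib

/-- A strong Eulerian triple: a set of three distinct rationals `{x₁, x₂, x₃}` such that
`xᵢxⱼ + xᵢ + xⱼ` is a rational square for all `i < j` and `xᵢ² + 2xᵢ` is a rational square
for all `i`. -/
def IsStrongEulerianTriple (S : Set ℚ) : Prop :=
  ∃ x₁ x₂ x₃ : ℚ, S = {x₁, x₂, x₃} ∧ x₁ ≠ x₂ ∧ x₁ ≠ x₃ ∧ x₂ ≠ x₃ ∧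
    IsSquare (x₁ * x₂ + x₁ + x₂) ∧ IsSquare (x₁ * x₃ + x₁ + x₃) ∧
    IsSquare (x₂ * x₃ + x₂ + x₃) ∧
    IsSquare (x₁ ^ 2 + 2 * x₁) ∧ IsSquare (x₂ ^ 2 + 2 * x₂) ∧ IsSquare (x₃ ^ 2 + 2 * x₃)

/-- first member generator -/
def seAA (m : ℚ) : ℚ := (m^2 - 2)/(2*m)

/-- second member generator -/
def seBB (m : ℚ) : ℚ :=
  (m^10 - 18*m^8 - 24*m^6 + 48*m^4 + 144*m^2 - 32)/(2*m*(m^4-12)*(4-3*m^4))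

lemma seAA_pos {m : ℚ} (hm : 5 ≤ m) : 0 < seAA m := by
  have hm0 : 0 < m := by linarith
  have h2 : 0 < m^2 - 2 := by nlinarith
  exact div_pos h2 (by linarith)

lemma se_basic {m : ℚ} (hm : 5 ≤ m) :
    0 < m ∧ 0 < m^4 - 12 ∧ 4 - 3*m^4 < 0 ∧
    0 < m^10 - 18*m^8 - 24*m^6 + 48*m^4 + 144*m^2 - 32 ∧
    2*m*(m^4-12)*(4-3*m^4) < 0 := by
  have hm0 : 0 < m := by linarith
  have h25 : 25 ≤ m^2 := by nlinarith
  have h4 : 625 ≤ m^4 := by nlinarith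
  have h6nn : (0:ℚ) ≤ m^6 := by positivity
  have h8nn : (0:ℚ) ≤ m^8 := by positivity
  have h2nn : (0:ℚ) ≤ m^2 := by positivity
  have h4nn : (0:ℚ) ≤ m^4 := by positivity
  have hA : 25*m^8 ≤ m^10 := by nlinarith
  have hB : 25*m^6 ≤ m^8 := by nlinarith
  have hC : 625*m^2 ≤ m^6 := by nlinarith
  have hD : (1:ℚ) ≤ m^6 := by nlinarith
  have h12 : 0 < m^4 - 12 := by linarith
  have h34 : 4 - 3*m^4 < 0 := by linarith
  have hB1 : 0 < m^10 - 18*m^8 - 24*m^6 + 48*m^4 + 144*m^2 - 32 := by linarith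
  refine ⟨hm0, h12, h34, hB1, ?_⟩
  have : 0 < 2*m*(m^4-12) := by positivity
  exact mul_neg_of_pos_of_neg this h34

lemma seBB_neg {m : ℚ} (hm : 5 ≤ m) : seBB m < 0 := by
  obtain ⟨_, _, _, hB1, hB2⟩ := se_basic hm
  exact div_neg_of_pos_of_neg hB1 hB2

lemma se_sum_pos {m : ℚ} (hm : 5 ≤ m) : 0 < seAA m + seBB m := by
  obtain ⟨hm0, h12, h34, hB1, hB2⟩ := se_basic hm
  have hm0' : m ≠ 0 := ne_of_gt hm0
  have h12' : m^4 - 12 ≠ 0 := ne_of_gt h12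
  have h34' : 4 - 3*m^4 ≠ 0 := ne_of_lt h34
  have h25 : 25 ≤ m^2 := by nlinarith
  have h6nn : (0:ℚ) ≤ m^6 := by positivity
  have h8nn : (0:ℚ) ≤ m^8 := by positivity
  have h2nn : (0:ℚ) ≤ m^2 := by positivity
  have h4nn : (0:ℚ) ≤ m^4 := by positivity
  have hA : 25*m^8 ≤ m^10 := by nlinarith
  have hB : 25*m^6 ≤ m^8 := by nlinarith
  have hC : 625*m^2 ≤ m^6 := by nlinarith
  have hD : (1:ℚ) ≤ m^6 := by nlinarith
  have hPp : -2*m^10 - 12*m^8 + 16*m^6 - 32*m^4 + 96*m^2 + 64 < 0 := by linarith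
  have hsum : seAA m + seBB m =
      (-2*m^10 - 12*m^8 + 16*m^6 - 32*m^4 + 96*m^2 + 64) / (2*m*(m^4-12)*(4-3*m^4)) := by
    unfold seAA seBB
    rw [div_add_div _ _ (by simp [*]) (by simp [*]), div_eq_div_iff (by simp [*]) (by simp [*])]
    ring
  rw [hsum]
  exact div_pos_of_neg_of_neg hPp hB2

lemma se_sq_lt {m : ℚ} (hm : 5 ≤ m) : seBB m ^ 2 < seAA m ^ 2 := by
  have h1 := seAA_pos hm
  have h2 := seBB_neg hm
  have h3 := se_sum_pos hm
  exact sq_lt_sq' (by linarith) (by linarith)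

lemma se_mem {m : ℚ} (hm : 5 ≤ m) :
    IsStrongEulerianTriple {0, seAA m ^ 2, seBB m ^ 2} := by
  obtain ⟨hm0, h12, h34, hB1, hB2⟩ := se_basic hm
  have hm0' : m ≠ 0 := ne_of_gt hm0
  have h12' : m^4 - 12 ≠ 0 := ne_of_gt h12
  have h34' : 4 - 3*m^4 ≠ 0 := ne_of_lt h34
  have haa := seAA_pos hm
  have hbb := seBB_neg hm
  have hlt := se_sq_lt hm
  refine ⟨0, seAA m ^ 2, seBB m ^ 2, rfl, ?_, ?_, ?_, ?_, ?_, ?_, ?_, ?_, ?_⟩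
  · exact fun h => absurd h.symm (ne_of_gt (by positivity))
  · have hbb' : seBB m ≠ 0 := ne_of_lt hbb
    have : 0 < seBB m ^ 2 := by positivity
    exact fun h => absurd h.symm (ne_of_gt this)
  · exact ne_of_gt hlt
  · exact ⟨seAA m, by ring⟩
  · exact ⟨seBB m, by ring⟩
  · refine ⟨(m^12 + 68*m^8 - 272*m^4 - 64)/(4*m^2*(m^4-12)*(4-3*m^4)), ?_⟩
    unfold seAA seBB
    rw [div_pow, div_pow, div_mul_div_comm, div_add_div _ _ (by simp [*]) (by simp [*]),
      div_add_div _ _ (by simp [*]) (by simp [*]), div_mul_div_comm,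
      div_eq_div_iff (by simp [*]) (by simp [*])]
    ring
  · exact ⟨0, by norm_num⟩
  · refine ⟨(m^4 - 4)/(4*m^2), ?_⟩
    unfold seAA
    field_simp
    ring
  · refine ⟨((m^10 - 18*m^8 - 24*m^6 + 48*m^4 + 144*m^2 - 32) *
      (m^10 + 18*m^8 - 24*m^6 - 48*m^4 + 144*m^2 + 32))/(4*m^2*(m^4-12)^2*(4-3*m^4)^2), ?_⟩
    unfold seBB
    field_simp
    ring

theorem infinitely_many_strong_eulerian_triples :
    {S : Set ℚ | IsStrongEulerianTriple S}.Infinite := by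
  have key : ∀ k : ℕ, (5:ℚ) ≤ (k:ℚ) + 5 := by
    intro k
    have : (0:ℚ) ≤ (k:ℚ) := Nat.cast_nonneg k
    linarith
  refine Set.infinite_of_injective_forall_mem
    (f := fun k : ℕ => ({0, seAA ((k:ℚ)+5) ^ 2, seBB ((k:ℚ)+5) ^ 2} : Set ℚ)) ?_ ?_
  · intro j k h
    have hmj := key j
    have hmk := key k
    set x : ℚ := (j:ℚ) + 5 with hx
    set y : ℚ := (k:ℚ) + 5 with hy
    have hax := seAA_pos hmj
    have hay := seAA_pos hmk
    have hltx := se_sq_lt hmj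
    have hlty := se_sq_lt hmk
    have hbx : 0 < seBB x ^ 2 := by
      have h' : seBB x ≠ 0 := ne_of_lt (seBB_neg hmj); positivity
    have hby : 0 < seBB y ^ 2 := by
      have h' : seBB y ≠ 0 := ne_of_lt (seBB_neg hmk); positivity
    have hAx : 0 < seAA x ^ 2 := by positivity
    have hAy : 0 < seAA y ^ 2 := by positivity
    -- seAA x ^2 is in the second set
    have h' : ({0, seAA x ^ 2, seBB x ^ 2} : Set ℚ) = {0, seAA y ^ 2, seBB y ^ 2} := h
    have hmem : seAA x ^ 2 ∈ ({0, seAA y ^ 2, seBB y ^ 2} : Set ℚ) := by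
      rw [← h']; simp
    have hmem2 : seAA y ^ 2 ∈ ({0, seAA x ^ 2, seBB x ^ 2} : Set ℚ) := by
      rw [h']; simp
    have hAA : seAA x ^ 2 = seAA y ^ 2 := by
      rcases hmem with h1 | h1 | h1
      · exact absurd h1 (ne_of_gt hAx)
      · exact h1
      · exfalso
        rcases hmem2 with h2 | h2 | h2
        · exact absurd h2 (ne_of_gt hAy)
        · rw [h2] at hlty; rw [h1] at hlty; exact lt_irrefl _ hlty
        · rw [h1] at hltx
          rw [h2] at hlty
          linarith
    have hxy : seAA x = seAA y := by
      nlinarith [hax, hay, hAA]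
    have hx0 : x ≠ 0 := by positivity
    have hy0 : y ≠ 0 := by positivity
    have hcross : (x^2 - 2) * (2*y) = (y^2 - 2) * (2*x) := by
      unfold seAA at hxy
      rw [div_eq_div_iff (by positivity) (by positivity)] at hxy
      exact hxy
    have hfac : (x - y) * (x*y + 2) = 0 := by linear_combination (1/2) * hcross
    have hxy2 : x = y := by
      rcases mul_eq_zero.1 hfac with h' | h'
      · linarith
      · nlinarith
    have : (j:ℚ) = (k:ℚ) := by
      rw [hx, hy] at hxy2; linarith
    exact_mod_cast this
  · intro k
    exact se_mem (key k)
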